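/- For every n, the matrix exponential restricts to a bijection from the set of real lower-triangular n×n matrices onto the set of real lower-triangular n×n matrices with strictly positive diagonal entries. -/

import Mathlib

open NormedSpace Finset Matrix

namespace ExpLTAux

variable {m : ℕ} {I : Type*} [Fintype I] [DecidableEq I]

def LT (m : ℕ) : Set (Matrix (Fin m) (Fin m) ℝ) := {A | ∀ i j : Fin m, i < j → A i j = 0}

lemma one_mem : (1 : Matrix (Fin m) (Fin m) ℝ) ∈ LT m := fun i j h =>
  Matrix.one_apply_ne (ne_of_lt h)

lemma mul_mem {A B : Matrix (Fin m) (Fin m) ℝ} (hA : A ∈ LT m) (hB : B ∈ LT m) :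
    A * B ∈ LT m := by
  intro i j hij
  rw [Matrix.mul_apply]
  refine Finset.sum_eq_zero fun k _ => ?_
  rcases lt_or_ge i k with h | h
  · rw [hA i k h, zero_mul]
  · rw [hB k j (lt_of_le_of_lt h hij), mul_zero]

lemma mul_diag {A B : Matrix (Fin m) (Fin m) ℝ} (hA : A ∈ LT m) (hB : B ∈ LT m) (i : Fin m) :
    (A * B) i i = A i i * B i i := by
  rw [Matrix.mul_apply]
  refine Finset.sum_eq_single i (fun k _ hk => ?_) (fun h => absurd (Finset.mem_univ i) h)
  rcases lt_or_ge i k with h | h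
  · rw [hA i k h, zero_mul]
  · rw [hB k i (lt_of_le_of_ne h hk), mul_zero]

lemma pow_mem {A : Matrix (Fin m) (Fin m) ℝ} (hA : A ∈ LT m) (k : ℕ) : A ^ k ∈ LT m := by
  induction k with
  | zero => simpa [pow_zero] using one_mem
  | succ k ih => rw [pow_succ]; exact mul_mem ih hA

lemma pow_diag {A : Matrix (Fin m) (Fin m) ℝ} (hA : A ∈ LT m) (k : ℕ) (i : Fin m) :
    (A ^ k) i i = (A i i) ^ k := by
  induction k with
  | zero => simp [Matrix.one_apply_eq]
  | succ k ih => rw [pow_succ, mul_diag (pow_mem hA k) hA, ih, pow_succ]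

lemma smul_mem {A : Matrix (Fin m) (Fin m) ℝ} (c : ℝ) (hA : A ∈ LT m) : c • A ∈ LT m := by
  intro i j h
  rw [Matrix.smul_apply, hA i j h, smul_zero]

lemma sum_mem {ι : Type*} {s : Finset ι} {f : ι → Matrix (Fin m) (Fin m) ℝ}
    (h : ∀ x ∈ s, f x ∈ LT m) : (∑ x ∈ s, f x) ∈ LT m := by
  intro i j hij
  rw [Matrix.sum_apply]
  exact Finset.sum_eq_zero fun x hx => h x hx i j hij

lemma isClosed_LT : IsClosed (LT m) := by
  have : LT m = ⋂ (i : Fin m) (j : Fin m) (_ : i < j),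
      {A : Matrix (Fin m) (Fin m) ℝ | A i j = 0} := by
    ext A
    simp [LT, Set.mem_iInter]
  rw [this]
  refine isClosed_iInter fun i => isClosed_iInter fun j => isClosed_iInter fun _ => ?_
  exact isClosed_eq (continuous_id.matrix_elem i j) continuous_const

lemma hasSum_exp (A : Matrix I I ℝ) :
    HasSum (fun k : ℕ => ((k.factorial : ℝ))⁻¹ • A ^ k) (exp A) := by
  letI : SeminormedRing (Matrix I I ℝ) := Matrix.linftyOpSemiNormedRing
  letI : NormedRing (Matrix I I ℝ) := Matrix.linftyOpNormedRing
  letI : NormedAlgebra ℝ (Matrix I I ℝ) := Matrix.linftyOpNormedAlgebra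
  have h := (expSeries_summable' (𝕂 := ℝ) A).hasSum
  rw [exp_eq_tsum (𝕂 := ℝ)]
  exact h

lemma entry_hasSum {X : Type*} {p q : Type*} {f : X → Matrix p q ℝ} {M : Matrix p q ℝ}
    (h : HasSum f M) (i : p) (j : q) : HasSum (fun x => f x i j) (M i j) :=
  h.map (Matrix.entryAddMonoidHom ℝ i j) (continuous_id.matrix_elem i j)



lemma hasSum_realexp (y : ℝ) :
    HasSum (fun k : ℕ => ((k.factorial : ℝ))⁻¹ * y ^ k) (Real.exp y) := by
  have h := expSeries_div_hasSum_exp y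
  rw [← Real.exp_eq_exp_ℝ] at h
  have e : (fun n : ℕ => y ^ n / (n.factorial : ℝ)) = fun k => ((k.factorial : ℝ))⁻¹ * y ^ k := by
    funext k; rw [div_eq_mul_inv, mul_comm]
  rw [e] at h
  exact h

noncomputable def dd (x y : ℝ) : ℝ :=
  if x = y then Real.exp x else (Real.exp x - Real.exp y) / (x - y)

lemma dd_pos (x y : ℝ) : 0 < dd x y := by
  unfold dd
  split_ifs with h
  · exact Real.exp_pos x
  · rcases lt_or_gt_of_ne h with hlt | hgt
    · have h1 : Real.exp x - Real.exp y < 0 := by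
        have := Real.exp_lt_exp.2 hlt; linarith
      have h2 : x - y < 0 := by linarith
      exact div_pos_of_neg_of_neg h1 h2
    · have h1 : 0 < Real.exp x - Real.exp y := by
        have := Real.exp_lt_exp.2 hgt; linarith
      have h2 : 0 < x - y := by linarith
      exact div_pos h1 h2

lemma hasSum_dd (x y : ℝ) :
    HasSum (fun k : ℕ => ((k.factorial : ℝ))⁻¹ * ∑ j ∈ Finset.range k, x ^ j * y ^ (k - 1 - j))
      (dd x y) := by
  unfold dd
  split_ifs with h
  · -- x = y : term k = (k!)⁻¹ * (k * x^(k-1))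
    subst h
    have key : ∀ k : ℕ,
        ((k.factorial : ℝ))⁻¹ * ∑ j ∈ Finset.range k, x ^ j * x ^ (k - 1 - j)
          = if k = 0 then 0 else x ^ (k-1) / (k-1).factorial := by
      intro k
      cases k with
      | zero => simp
      | succ k =>
        simp only [Nat.succ_ne_zero, if_false]
        have hsum : ∀ j ∈ Finset.range (k+1), x ^ j * x ^ (k + 1 - 1 - j) = x ^ k := by
          intro j hj
          rw [Finset.mem_range] at hj
          rw [← pow_add]
          congr 1
          omega
        rw [Finset.sum_congr rfl hsum, Finset.sum_const, Finset.card_range, nsmul_eq_mul]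
        rw [Nat.factorial_succ, Nat.add_sub_cancel]
        push_cast
        field_simp
    have h2 : HasSum (fun k : ℕ => if k = 0 then (0:ℝ) else x ^ (k-1) / (k-1).factorial)
        (Real.exp x) := by
      have hshift : HasSum (fun k : ℕ =>
          (fun k : ℕ => if k = 0 then (0:ℝ) else x ^ (k-1) / (k-1).factorial) (k + 1))
          (Real.exp x) := by
        simp only [Nat.succ_ne_zero, if_false, Nat.add_sub_cancel]
        have h := expSeries_div_hasSum_exp x
        rw [← Real.exp_eq_exp_ℝ] at h
        exact h
      have := (hasSum_nat_add_iff (f := fun k : ℕ =>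
          if k = 0 then (0:ℝ) else x ^ (k-1) / (k-1).factorial) 1).mp hshift
      simpa using this
    exact (funext key) ▸ h2
  · -- x ≠ y
    have hxy : x - y ≠ 0 := sub_ne_zero.2 h
    have hx := hasSum_realexp x
    have hy := hasSum_realexp y
    have hsub := (hx.sub hy).mul_right (x - y)⁻¹
    have hfun : ∀ k : ℕ,
        ((k.factorial : ℝ))⁻¹ * ∑ j ∈ Finset.range k, x ^ j * y ^ (k - 1 - j)
          = (((k.factorial : ℝ))⁻¹ * x ^ k - ((k.factorial : ℝ))⁻¹ * y ^ k) * (x - y)⁻¹ := by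
      intro k
      have hg := geom_sum₂_mul x y k
      have hs : (∑ j ∈ Finset.range k, x ^ j * y ^ (k - 1 - j)) = (x ^ k - y ^ k) / (x - y) := by
        field_simp
        linarith [hg]
      rw [hs]
      field_simp
      try ring
    rw [div_eq_mul_inv]
    simp only [hfun]
    exact hsub



noncomputable def tM (A : Matrix I I ℝ) (d : ℝ) (k : ℕ) : Matrix I I ℝ :=
  ∑ j ∈ Finset.range k, d ^ j • A ^ (k - 1 - j)

lemma summable_tM (A : Matrix I I ℝ) (d : ℝ) :
    Summable (fun k : ℕ => ((k.factorial : ℝ))⁻¹ • tM A d k) := by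
  letI : SeminormedRing (Matrix I I ℝ) := Matrix.linftyOpSemiNormedRing
  letI : NormedRing (Matrix I I ℝ) := Matrix.linftyOpNormedRing
  letI : NormedAlgebra ℝ (Matrix I I ℝ) := Matrix.linftyOpNormedAlgebra
  set B : ℝ := max |d| (max ‖A‖ 1) with hBdef
  have hB1 : (1:ℝ) ≤ B := le_max_of_le_right (le_max_right _ _)
  have hB0 : (0:ℝ) ≤ B := zero_le_one.trans hB1
  set K : ℝ := max ‖(1 : Matrix I I ℝ)‖ 1 with hKdef
  have hK1 : (1:ℝ) ≤ K := le_max_right _ _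
  have hpow : ∀ q : ℕ, ‖A ^ q‖ ≤ K * B ^ q := by
    intro q
    cases q with
    | zero =>
      rw [pow_zero, pow_zero, mul_one]
      exact le_max_left _ _
    | succ q =>
      have h1 : ‖A ^ (q+1)‖ ≤ ‖A‖ ^ (q+1) := norm_pow_le' A (Nat.succ_pos q)
      have h2 : ‖A‖ ≤ B := le_max_of_le_right (le_max_left _ _)
      have h3 : ‖A‖ ^ (q+1) ≤ B ^ (q+1) := pow_le_pow_left₀ (norm_nonneg A) h2 _
      have h4 : (0:ℝ) < B ^ (q+1) := pow_pos (lt_of_lt_of_le zero_lt_one hB1) _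
      nlinarith
  have hbound : ∀ k : ℕ, ‖((k.factorial : ℝ))⁻¹ • tM A d k‖
      ≤ K * ((k : ℝ) * B ^ (k-1) / (k.factorial : ℝ)) := by
    intro k
    rw [norm_smul]
    have ht : ‖tM A d k‖ ≤ (k:ℝ) * (K * B ^ (k-1)) := by
      refine (norm_sum_le _ _).trans ?_
      have hterm : ∀ j ∈ Finset.range k, ‖d ^ j • A ^ (k-1-j)‖ ≤ K * B^(k-1) := by
        intro j hj
        rw [Finset.mem_range] at hj
        rw [norm_smul]
        have h5 : ‖d ^ j‖ ≤ B ^ j := by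
          rw [norm_pow, Real.norm_eq_abs]
          exact pow_le_pow_left₀ (abs_nonneg d) (le_max_left _ _) _
        have h6 : ‖A ^ (k-1-j)‖ ≤ K * B ^ (k-1-j) := hpow _
        have h7 : (0:ℝ) ≤ ‖A ^ (k-1-j)‖ := norm_nonneg _
        have h8 : (0:ℝ) ≤ B^j := pow_nonneg hB0 _
        calc ‖d ^ j‖ * ‖A ^ (k-1-j)‖ ≤ B^j * (K * B^(k-1-j)) := by
              exact mul_le_mul h5 h6 h7 (pow_nonneg hB0 _)
          _ = K * (B^j * B^(k-1-j)) := by ring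
          _ = K * B^(k-1) := by rw [← pow_add]; congr 2; omega
      calc ∑ j ∈ Finset.range k, ‖d ^ j • A ^ (k-1-j)‖
          ≤ ∑ _j ∈ Finset.range k, K * B^(k-1) := Finset.sum_le_sum hterm
        _ = (k:ℝ) * (K * B^(k-1)) := by
            rw [Finset.sum_const, Finset.card_range, nsmul_eq_mul]
    have hfact : (0:ℝ) < (k.factorial : ℝ) := by positivity
    have hnn : ‖((k.factorial : ℝ))⁻¹‖ = ((k.factorial : ℝ))⁻¹ := by
      rw [Real.norm_eq_abs, abs_of_pos (by positivity)]
    rw [hnn]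
    rw [div_eq_mul_inv]
    calc ((k.factorial : ℝ))⁻¹ * ‖tM A d k‖
        ≤ ((k.factorial : ℝ))⁻¹ * ((k:ℝ) * (K * B^(k-1))) := by
          exact mul_le_mul_of_nonneg_left ht (by positivity)
      _ = K * ((k:ℝ) * B^(k-1) * ((k.factorial : ℝ))⁻¹) := by ring
  refine Summable.of_norm_bounded (Summable.mul_left K ?_) hbound
  have h1 : Summable (fun k : ℕ => (((k+1) : ℕ) : ℝ) * B ^ ((k+1)-1) / (((k+1).factorial : ℝ))) := by
    have heq : ∀ k : ℕ, (((k+1) : ℕ) : ℝ) * B ^ ((k+1)-1) / (((k+1).factorial : ℝ))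
        = B ^ k / (k.factorial : ℝ) := by
      intro k
      rw [Nat.factorial_succ, Nat.add_sub_cancel]
      push_cast
      have hk : ((k:ℝ)+1) ≠ 0 := by positivity
      field_simp
      try ring
    simp only [heq]
    exact Real.summable_pow_div_factorial B
  exact (summable_nat_add_iff 1).mp h1

noncomputable def gM (A : Matrix I I ℝ) (d : ℝ) : Matrix I I ℝ :=
  ∑' k : ℕ, ((k.factorial : ℝ))⁻¹ • tM A d k

lemma hasSum_gM (A : Matrix I I ℝ) (d : ℝ) :
    HasSum (fun k : ℕ => ((k.factorial : ℝ))⁻¹ • tM A d k) (gM A d) :=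
  (summable_tM A d).hasSum

lemma tM_mem {A : Matrix (Fin m) (Fin m) ℝ} (hA : A ∈ LT m) (d : ℝ) (k : ℕ) : tM A d k ∈ LT m :=
  sum_mem fun j _ => smul_mem _ (pow_mem hA _)

lemma gM_mem {A : Matrix (Fin m) (Fin m) ℝ} (hA : A ∈ LT m) (d : ℝ) : gM A d ∈ LT m := by
  refine isClosed_LT.mem_of_tendsto (hasSum_gM A d).tendsto_sum_nat ?_
  filter_upwards with s using sum_mem fun k _ => smul_mem _ (tM_mem hA d k)

lemma gM_diag {A : Matrix (Fin m) (Fin m) ℝ} (hA : A ∈ LT m) (d : ℝ) (i : Fin m) :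
    gM A d i i = dd d (A i i) := by
  have h := entry_hasSum (hasSum_gM A d) i i
  have h2 : ∀ k : ℕ, (((k.factorial : ℝ))⁻¹ • tM A d k) i i
      = ((k.factorial : ℝ))⁻¹ * ∑ j ∈ Finset.range k, d^j * (A i i)^(k-1-j) := by
    intro k
    rw [Matrix.smul_apply, smul_eq_mul]
    congr 1
    unfold tM
    rw [Matrix.sum_apply]
    refine Finset.sum_congr rfl fun j _ => ?_
    rw [Matrix.smul_apply, smul_eq_mul, pow_diag hA]
  simp only [h2] at h
  exact h.unique (hasSum_dd d (A i i))

lemma gM_diag_pos {A : Matrix (Fin m) (Fin m) ℝ} (hA : A ∈ LT m) (d : ℝ) (i : Fin m) :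
    0 < gM A d i i := by
  rw [gM_diag hA]
  exact dd_pos _ _

lemma det_ne_zero_of_LT {G : Matrix (Fin m) (Fin m) ℝ} (hG : G ∈ LT m)
    (hdiag : ∀ i, 0 < G i i) : G.det ≠ 0 := by
  have h : G.BlockTriangular OrderDual.toDual := by
    intro i j hij
    exact hG i j hij
  rw [Matrix.det_of_lowerTriangular G h]
  exact ne_of_gt (Finset.prod_pos fun i _ => hdiag i)

lemma exp_mem {A : Matrix (Fin m) (Fin m) ℝ} (hA : A ∈ LT m) : exp A ∈ LT m := by
  refine isClosed_LT.mem_of_tendsto (hasSum_exp A).tendsto_sum_nat ?_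
  filter_upwards with s using sum_mem fun k _ => smul_mem _ (pow_mem hA _)

lemma exp_diag {A : Matrix (Fin m) (Fin m) ℝ} (hA : A ∈ LT m) (i : Fin m) :
    (exp A) i i = Real.exp (A i i) := by
  have h := entry_hasSum (hasSum_exp A) i i
  have h2 : ∀ k : ℕ, (((k.factorial : ℝ))⁻¹ • A ^ k) i i
      = ((k.factorial : ℝ))⁻¹ * (A i i)^k := by
    intro k
    rw [Matrix.smul_apply, smul_eq_mul, pow_diag hA]
  simp only [h2] at h
  exact h.unique (hasSum_realexp (A i i))

section Blocks

variable {n : ℕ}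

lemma tM_zero (A : Matrix (Fin n) (Fin n) ℝ) (d : ℝ) : tM A d 0 = 0 := by
  simp [tM]

lemma tM_succ (A : Matrix (Fin n) (Fin n) ℝ) (d : ℝ) (k : ℕ) :
    tM A d (k+1) = tM A d k * A + d ^ k • 1 := by
  unfold tM
  rw [Finset.sum_range_succ]
  congr 1
  · rw [Finset.sum_mul]
    refine Finset.sum_congr rfl fun j hj => ?_
    rw [Finset.mem_range] at hj
    rw [smul_mul_assoc, ← pow_succ]
    congr 2
    omega
  · have : k + 1 - 1 - k = 0 := by omega
    rw [this, pow_zero]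

lemma pow_fromBlocks (A : Matrix (Fin n) (Fin n) ℝ) (C : Matrix (Fin 1) (Fin n) ℝ) (d : ℝ)
    (k : ℕ) :
    (Matrix.fromBlocks A 0 C (d • (1 : Matrix (Fin 1) (Fin 1) ℝ))) ^ k
      = Matrix.fromBlocks (A ^ k) 0 (C * tM A d k) ((d ^ k) • 1) := by
  induction k with
  | zero =>
    rw [pow_zero, pow_zero, pow_zero, tM_zero, Matrix.mul_zero, one_smul,
      ← Matrix.fromBlocks_one]
  | succ k ih =>
    rw [pow_succ, ih, Matrix.fromBlocks_multiply, tM_succ]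
    simp only [Matrix.zero_mul, Matrix.mul_zero, add_zero, zero_add, Matrix.mul_add,
      Matrix.mul_assoc, Matrix.mul_smul, Matrix.smul_mul, Matrix.mul_one, Matrix.one_mul,
      smul_smul, smul_zero, ← pow_succ, ← pow_succ']

lemma fromBlocks_eq_sum (A : Matrix (Fin n) (Fin n) ℝ) (B : Matrix (Fin n) (Fin 1) ℝ)
    (C : Matrix (Fin 1) (Fin n) ℝ) (D : Matrix (Fin 1) (Fin 1) ℝ) :
    Matrix.fromBlocks A B C D
      = Matrix.fromBlocks A 0 0 0 + Matrix.fromBlocks 0 B 0 0 + Matrix.fromBlocks 0 0 C 0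
        + Matrix.fromBlocks 0 0 0 D := by
  simp [Matrix.fromBlocks_add]

lemma hasSum_fromBlocks {X : Type*} {f₁₁ : X → Matrix (Fin n) (Fin n) ℝ}
    {f₁₂ : X → Matrix (Fin n) (Fin 1) ℝ} {f₂₁ : X → Matrix (Fin 1) (Fin n) ℝ}
    {f₂₂ : X → Matrix (Fin 1) (Fin 1) ℝ} {S₁₁ S₁₂ S₂₁ S₂₂}
    (h₁₁ : HasSum f₁₁ S₁₁) (h₁₂ : HasSum f₁₂ S₁₂) (h₂₁ : HasSum f₂₁ S₂₁)
    (h₂₂ : HasSum f₂₂ S₂₂) :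
    HasSum (fun x => Matrix.fromBlocks (f₁₁ x) (f₁₂ x) (f₂₁ x) (f₂₂ x))
      (Matrix.fromBlocks S₁₁ S₁₂ S₂₁ S₂₂) := by
  have m11 := h₁₁.map
    (AddMonoidHom.mk' (fun A : Matrix (Fin n) (Fin n) ℝ =>
      (Matrix.fromBlocks A 0 0 0 : Matrix (Fin n ⊕ Fin 1) (Fin n ⊕ Fin 1) ℝ))
      (fun a b => by rw [Matrix.fromBlocks_add]; simp))
    (continuous_id.matrix_fromBlocks continuous_const continuous_const continuous_const)
  have m12 := h₁₂.map
    (AddMonoidHom.mk' (fun B : Matrix (Fin n) (Fin 1) ℝ =>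
      (Matrix.fromBlocks 0 B 0 0 : Matrix (Fin n ⊕ Fin 1) (Fin n ⊕ Fin 1) ℝ))
      (fun a b => by rw [Matrix.fromBlocks_add]; simp))
    (continuous_const.matrix_fromBlocks continuous_id continuous_const continuous_const)
  have m21 := h₂₁.map
    (AddMonoidHom.mk' (fun C : Matrix (Fin 1) (Fin n) ℝ =>
      (Matrix.fromBlocks 0 0 C 0 : Matrix (Fin n ⊕ Fin 1) (Fin n ⊕ Fin 1) ℝ))
      (fun a b => by rw [Matrix.fromBlocks_add]; simp))
    (continuous_const.matrix_fromBlocks continuous_const continuous_id continuous_const)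
  have m22 := h₂₂.map
    (AddMonoidHom.mk' (fun D : Matrix (Fin 1) (Fin 1) ℝ =>
      (Matrix.fromBlocks 0 0 0 D : Matrix (Fin n ⊕ Fin 1) (Fin n ⊕ Fin 1) ℝ))
      (fun a b => by rw [Matrix.fromBlocks_add]; simp))
    (continuous_const.matrix_fromBlocks continuous_const continuous_const continuous_id)
  simp only [AddMonoidHom.mk'_apply, Function.comp_def] at m11 m12 m21 m22
  have hsum := ((m11.add m12).add m21).add m22
  have heq : ∀ x, Matrix.fromBlocks (f₁₁ x) 0 0 0 + Matrix.fromBlocks 0 (f₁₂ x) 0 0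
      + Matrix.fromBlocks 0 0 (f₂₁ x) 0 + Matrix.fromBlocks 0 0 0 (f₂₂ x)
      = Matrix.fromBlocks (f₁₁ x) (f₁₂ x) (f₂₁ x) (f₂₂ x) :=
    fun x => (fromBlocks_eq_sum _ _ _ _).symm
  simp only [heq] at hsum
  rw [fromBlocks_eq_sum S₁₁ S₁₂ S₂₁ S₂₂]
  exact hsum

lemma exp_fromBlocks (A : Matrix (Fin n) (Fin n) ℝ) (C : Matrix (Fin 1) (Fin n) ℝ) (d : ℝ) :
    exp (Matrix.fromBlocks A 0 C (d • (1 : Matrix (Fin 1) (Fin 1) ℝ)))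
      = Matrix.fromBlocks (exp A) 0 (C * gM A d) (Real.exp d • 1) := by
  refine (hasSum_exp _).unique ?_
  have h11 := hasSum_exp A
  have h21 : HasSum (fun k : ℕ => ((k.factorial : ℝ))⁻¹ • (C * tM A d k)) (C * gM A d) := by
    have h := (hasSum_gM A d).map
      (AddMonoidHom.mk' (fun X : Matrix (Fin n) (Fin n) ℝ => C * X) (fun a b => Matrix.mul_add C a b))
      (continuous_const.matrix_mul continuous_id)
    simp only [AddMonoidHom.mk'_apply, Function.comp_def] at h
    have heq : ∀ k : ℕ, C * (((k.factorial : ℝ))⁻¹ • tM A d k)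
        = ((k.factorial : ℝ))⁻¹ • (C * tM A d k) := fun k => by rw [Matrix.mul_smul]
    simpa only [heq] using h
  have h22 : HasSum (fun k : ℕ => ((k.factorial : ℝ))⁻¹ • ((d ^ k) • (1 : Matrix (Fin 1) (Fin 1) ℝ)))
      (Real.exp d • 1) := by
    have h := (hasSum_realexp d).smul_const (1 : Matrix (Fin 1) (Fin 1) ℝ)
    have heq : ∀ k : ℕ, (((k.factorial : ℝ))⁻¹ * d ^ k) • (1 : Matrix (Fin 1) (Fin 1) ℝ)
        = ((k.factorial : ℝ))⁻¹ • ((d ^ k) • (1 : Matrix (Fin 1) (Fin 1) ℝ)) := fun k => by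
      rw [smul_smul]
    simpa only [heq] using h
  have h12 : HasSum (fun _ : ℕ => (0 : Matrix (Fin n) (Fin 1) ℝ)) 0 := hasSum_zero
  have hcomb := hasSum_fromBlocks h11 h12 h21 h22
  have heq : ∀ k : ℕ, Matrix.fromBlocks (((k.factorial : ℝ))⁻¹ • A ^ k) 0
      (((k.factorial : ℝ))⁻¹ • (C * tM A d k)) (((k.factorial : ℝ))⁻¹ • ((d ^ k) • 1))
      = ((k.factorial : ℝ))⁻¹ • (Matrix.fromBlocks A 0 C (d • (1 : Matrix (Fin 1) (Fin 1) ℝ))) ^ k := by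
    intro k
    rw [pow_fromBlocks, Matrix.fromBlocks_smul, smul_zero]
  simpa only [heq] using hcomb

end Blocks

section Transfer

variable {n : ℕ}

lemma exp_reindex (e : (Fin n ⊕ Fin 1) ≃ Fin (n+1)) (M : Matrix (Fin n ⊕ Fin 1) (Fin n ⊕ Fin 1) ℝ) :
    exp (Matrix.reindex e e M) = Matrix.reindex e e (exp M) := by
  letI : SeminormedRing (Matrix (Fin n ⊕ Fin 1) (Fin n ⊕ Fin 1) ℝ) := Matrix.linftyOpSemiNormedRing
  letI : NormedRing (Matrix (Fin n ⊕ Fin 1) (Fin n ⊕ Fin 1) ℝ) := Matrix.linftyOpNormedRing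
  letI : NormedAlgebra ℝ (Matrix (Fin n ⊕ Fin 1) (Fin n ⊕ Fin 1) ℝ) := Matrix.linftyOpNormedAlgebra
  letI : SeminormedRing (Matrix (Fin (n+1)) (Fin (n+1)) ℝ) := Matrix.linftyOpSemiNormedRing
  letI : NormedRing (Matrix (Fin (n+1)) (Fin (n+1)) ℝ) := Matrix.linftyOpNormedRing
  letI : NormedAlgebra ℝ (Matrix (Fin (n+1)) (Fin (n+1)) ℝ) := Matrix.linftyOpNormedAlgebra
  have hc : Continuous (Matrix.reindexAlgEquiv ℝ ℝ e) := by
    have : ⇑(Matrix.reindexAlgEquiv ℝ ℝ e)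
        = fun M : Matrix (Fin n ⊕ Fin 1) (Fin n ⊕ Fin 1) ℝ => M.submatrix ⇑e.symm ⇑e.symm := rfl
    rw [this]
    exact continuous_id.matrix_submatrix _ _
  have h := map_exp_of_mem_ball (𝕂 := ℝ) (Matrix.reindexAlgEquiv ℝ ℝ e) hc M
    ((expSeries_radius_eq_top ℝ (Matrix (Fin n ⊕ Fin 1) (Fin n ⊕ Fin 1) ℝ)).symm ▸ edist_lt_top _ _)
  exact h.symm

lemma fin1_eq_smul_one (D : Matrix (Fin 1) (Fin 1) ℝ) : D = (D 0 0) • 1 := by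
  ext i j
  have hi : i = 0 := Subsingleton.elim i 0
  have hj : j = 0 := Subsingleton.elim j 0
  subst hi; subst hj
  simp

end Transfer

section Main

lemma mapsTo (m : ℕ) : Set.MapsTo (exp) (LT m)
    {L : Matrix (Fin m) (Fin m) ℝ | L ∈ LT m ∧ ∀ i, 0 < L i i} := by
  intro A hA
  refine ⟨exp_mem hA, fun i => ?_⟩
  rw [exp_diag hA]
  exact Real.exp_pos _

theorem main : ∀ m : ℕ, Set.BijOn (exp) (LT m)
    {L : Matrix (Fin m) (Fin m) ℝ | L ∈ LT m ∧ ∀ i, 0 < L i i} := by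
  intro m
  induction m with
  | zero =>
    refine ⟨mapsTo 0, fun A _ B _ _ => ?_, fun L _ => ?_⟩
    · ext i j; exact absurd i.2 (by omega)
    · exact ⟨0, fun i j _ => absurd i.2 (by omega), by ext i j; exact absurd i.2 (by omega)⟩
  | succ n ih =>
    set e : (Fin n ⊕ Fin 1) ≃ Fin (n+1) := finSumFinEquiv with hedef
    have key : ∀ s : Fin n ⊕ Fin 1,
        ((e s : Fin (n+1)) : ℕ) = Sum.elim (fun a : Fin n => (a:ℕ)) (fun a : Fin 1 => n + a) s := by
      rintro (a | a) <;> simp [hedef]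
    have he_lt_ll : ∀ a b : Fin n, e (Sum.inl a) < e (Sum.inl b) ↔ a < b := by
      intro a b
      rw [Fin.lt_def, key, key, Fin.lt_def]
      simp
    have he_lt_lr : ∀ (a : Fin n) (b : Fin 1), e (Sum.inl a) < e (Sum.inr b) := by
      intro a b
      rw [Fin.lt_def, key, key]
      have := a.2
      simp only [Sum.elim_inl, Sum.elim_inr]
      omega
    have he_lt_rl : ∀ (a : Fin 1) (b : Fin n), ¬ (e (Sum.inr a) < e (Sum.inl b)) := by
      intro a b
      rw [Fin.lt_def, key, key]
      have := b.2
      simp only [Sum.elim_inl, Sum.elim_inr]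
      omega
    have he_lt_rr : ∀ a b : Fin 1, ¬ (e (Sum.inr a) < e (Sum.inr b)) := by
      intro a b
      have : a = b := Subsingleton.elim a b
      subst this
      exact lt_irrefl _
    -- membership transfer
    have hLT_iff : ∀ (A : Matrix (Fin n) (Fin n) ℝ) (B : Matrix (Fin n) (Fin 1) ℝ)
        (C : Matrix (Fin 1) (Fin n) ℝ) (D : Matrix (Fin 1) (Fin 1) ℝ),
        (Matrix.reindex e e (Matrix.fromBlocks A B C D) ∈ LT (n+1)) ↔ (A ∈ LT n ∧ B = 0) := by
      intro A B C D
      constructor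
      · intro h
        constructor
        · intro a b hab
          have := h (e (Sum.inl a)) (e (Sum.inl b)) ((he_lt_ll a b).mpr hab)
          simpa [Matrix.reindex_apply, Matrix.submatrix_apply] using this
        · ext a b
          have := h (e (Sum.inl a)) (e (Sum.inr b)) (he_lt_lr a b)
          simpa [Matrix.reindex_apply, Matrix.submatrix_apply] using this
      · rintro ⟨hA, rfl⟩
        intro i j hij
        obtain ⟨s, rfl⟩ := e.surjective i
        obtain ⟨t, rfl⟩ := e.surjective j
        rw [Matrix.reindex_apply, Matrix.submatrix_apply, e.symm_apply_apply, e.symm_apply_apply]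
        rcases s with a | a <;> rcases t with b | b
        · exact hA a b ((he_lt_ll a b).mp hij)
        · simp [Matrix.fromBlocks]
        · exact absurd hij (he_lt_rl a b)
        · exact absurd hij (he_lt_rr a b)
    have hdiag_iff : ∀ (A : Matrix (Fin n) (Fin n) ℝ) (B : Matrix (Fin n) (Fin 1) ℝ)
        (C : Matrix (Fin 1) (Fin n) ℝ) (D : Matrix (Fin 1) (Fin 1) ℝ),
        (∀ i, 0 < (Matrix.reindex e e (Matrix.fromBlocks A B C D)) i i)
          ↔ ((∀ a, 0 < A a a) ∧ 0 < D 0 0) := by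
      intro A B C D
      constructor
      · intro h
        constructor
        · intro a
          have := h (e (Sum.inl a))
          simpa [Matrix.reindex_apply, Matrix.submatrix_apply] using this
        · have := h (e (Sum.inr 0))
          simpa [Matrix.reindex_apply, Matrix.submatrix_apply] using this
      · rintro ⟨hA, hD⟩ i
        obtain ⟨s, rfl⟩ := e.surjective i
        rw [Matrix.reindex_apply, Matrix.submatrix_apply, e.symm_apply_apply]
        rcases s with a | a
        · exact hA a
        · have : a = 0 := Subsingleton.elim a 0
          subst this
          exact hD
    refine ⟨mapsTo (n+1), ?_, ?_⟩
    · -- injectivity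
      intro X hX Y hY hexp
      set X' := (Matrix.reindex e e).symm X with hX'def
      set Y' := (Matrix.reindex e e).symm Y with hY'def
      have hXr : X = Matrix.reindex e e X' := ((Matrix.reindex e e).apply_symm_apply X).symm
      have hYr : Y = Matrix.reindex e e Y' := ((Matrix.reindex e e).apply_symm_apply Y).symm
      have hXb : X' = Matrix.fromBlocks X'.toBlocks₁₁ X'.toBlocks₁₂ X'.toBlocks₂₁ X'.toBlocks₂₂ :=
        (Matrix.fromBlocks_toBlocks X').symm
      have hYb : Y' = Matrix.fromBlocks Y'.toBlocks₁₁ Y'.toBlocks₁₂ Y'.toBlocks₂₁ Y'.toBlocks₂₂ :=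
        (Matrix.fromBlocks_toBlocks Y').symm
      rw [hXr, hXb] at hX
      rw [hYr, hYb] at hY
      rw [hLT_iff] at hX hY
      obtain ⟨hA1, hB1⟩ := hX
      obtain ⟨hA2, hB2⟩ := hY
      set A1 := X'.toBlocks₁₁
      set C1 := X'.toBlocks₂₁
      set A2 := Y'.toBlocks₁₁
      set C2 := Y'.toBlocks₂₁
      set d1 := X'.toBlocks₂₂ 0 0
      set d2 := Y'.toBlocks₂₂ 0 0
      have hD1 : X'.toBlocks₂₂ = d1 • 1 := fin1_eq_smul_one _
      have hD2 : Y'.toBlocks₂₂ = d2 • 1 := fin1_eq_smul_one _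
      have hXf : X = Matrix.reindex e e (Matrix.fromBlocks A1 0 C1 (d1 • 1)) := by
        rw [hXr, hXb, hB1, hD1]
      have hYf : Y = Matrix.reindex e e (Matrix.fromBlocks A2 0 C2 (d2 • 1)) := by
        rw [hYr, hYb, hB2, hD2]
      rw [hXf, hYf, exp_reindex, exp_reindex, exp_fromBlocks, exp_fromBlocks] at hexp
      have hblocks := (Matrix.reindex e e).injective hexp
      have h11 : exp A1 = exp A2 := by
        have := congrArg Matrix.toBlocks₁₁ hblocks
        simpa [Matrix.toBlocks_fromBlocks₁₁] using this
      have h22 : Real.exp d1 • (1 : Matrix (Fin 1) (Fin 1) ℝ) = Real.exp d2 • 1 := by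
        have := congrArg Matrix.toBlocks₂₂ hblocks
        simpa [Matrix.toBlocks_fromBlocks₂₂] using this
      have hd : d1 = d2 := by
        have := congrFun (congrFun h22 0) 0
        simp only [Matrix.smul_apply, Matrix.one_apply_eq, smul_eq_mul, mul_one] at this
        exact Real.exp_injective this
      have hAeq : A1 = A2 := ih.injOn hA1 hA2 h11
      have h21 : C1 * gM A1 d1 = C2 * gM A1 d1 := by
        have := congrArg Matrix.toBlocks₂₁ hblocks
        simp only [Matrix.toBlocks_fromBlocks₂₁] at this
        rw [hAeq, hd]
        rw [← hAeq, ← hd] at this ⊢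
        rw [hAeq, hd] at this
        convert this using 2 <;> rw [hAeq, hd]
      have hgdet : (gM A1 d1).det ≠ 0 :=
        det_ne_zero_of_LT (gM_mem hA1 d1) (gM_diag_pos hA1 d1)
      have hC : C1 = C2 := by
        have h := congrArg (fun M => M * (gM A1 d1)⁻¹) h21
        simp only [Matrix.mul_assoc, Matrix.mul_nonsing_inv _ (Ne.isUnit hgdet),
          Matrix.mul_one] at h
        exact h
      rw [hXf, hYf, hAeq, hd, hC]
    · -- surjectivity
      intro L hL
      obtain ⟨hLLT, hLdiag⟩ := hL
      set L' := (Matrix.reindex e e).symm L with hL'def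
      have hLr : L = Matrix.reindex e e L' := ((Matrix.reindex e e).apply_symm_apply L).symm
      have hLb : L' = Matrix.fromBlocks L'.toBlocks₁₁ L'.toBlocks₁₂ L'.toBlocks₂₁ L'.toBlocks₂₂ :=
        (Matrix.fromBlocks_toBlocks L').symm
      have hmem : Matrix.reindex e e (Matrix.fromBlocks L'.toBlocks₁₁ L'.toBlocks₁₂
          L'.toBlocks₂₁ L'.toBlocks₂₂) ∈ LT (n+1) := by rw [← hLb, ← hLr]; exact hLLT
      rw [hLT_iff] at hmem
      obtain ⟨hL1, hB0⟩ := hmem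
      have hdiagL : (∀ a, 0 < L'.toBlocks₁₁ a a) ∧ 0 < L'.toBlocks₂₂ 0 0 := by
        rw [← hdiag_iff L'.toBlocks₁₁ L'.toBlocks₁₂ L'.toBlocks₂₁ L'.toBlocks₂₂]
        intro i
        rw [← hLb, ← hLr]
        exact hLdiag i
      obtain ⟨hL1diag, hldiag⟩ := hdiagL
      obtain ⟨A, hA, hexpA⟩ := ih.surjOn ⟨hL1, hL1diag⟩
      set d := Real.log (L'.toBlocks₂₂ 0 0) with hddef
      have hexpd : Real.exp d = L'.toBlocks₂₂ 0 0 := Real.exp_log hldiag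
      have hgdet : (gM A d).det ≠ 0 :=
        det_ne_zero_of_LT (gM_mem hA d) (gM_diag_pos hA d)
      set C := L'.toBlocks₂₁ * (gM A d)⁻¹ with hCdef
      refine ⟨Matrix.reindex e e (Matrix.fromBlocks A 0 C (d • 1)), ?_, ?_⟩
      · rw [hLT_iff]
        exact ⟨hA, rfl⟩
      · rw [exp_reindex, exp_fromBlocks, hexpA]
        have hCg : C * gM A d = L'.toBlocks₂₁ := by
          rw [hCdef, Matrix.mul_assoc, Matrix.nonsing_inv_mul _ (Ne.isUnit hgdet),
            Matrix.mul_one]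
        rw [hCg]
        have h22 : Real.exp d • (1 : Matrix (Fin 1) (Fin 1) ℝ) = L'.toBlocks₂₂ := by
          rw [hexpd, ← fin1_eq_smul_one]
        rw [h22, ← hB0, Matrix.fromBlocks_toBlocks L', ← hLr]

end Main
end ExpLTAux

/-- The matrix exponential restricts to a bijection from the set of real lower-triangular
`n × n` matrices onto the set of real lower-triangular `n × n` matrices with strictly
positive diagonal entries. -/
theorem exp_bijOn_lower_triangular (n : ℕ) :
    Set.BijOn (NormedSpace.exp : Matrix (Fin n) (Fin n) ℝ → Matrix (Fin n) (Fin n) ℝ)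
      {A : Matrix (Fin n) (Fin n) ℝ | ∀ i j : Fin n, i < j → A i j = 0}
      {L : Matrix (Fin n) (Fin n) ℝ |
        (∀ i j : Fin n, i < j → L i j = 0) ∧ ∀ i : Fin n, 0 < L i i} := by
  exact ExpLTAux.main n
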